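/- With the mixture-of-power utility $U$, the shifted argument $\hat\chi(x)$, $A = 1 + \frac{L\gamma}{\alpha} > 0$, and $f(x) = x^{1-\alpha} + x^{1-\beta}$, one has $\lim_{x\to\infty} \frac{U(\hat\chi(x)) - U(x)}{x^{1-\alpha} + x^{1-\beta}} = \frac{c_1}{1-\alpha}\big(A^{1-\alpha} - 1\big)$; in particular $U(\hat\chi(x)) - U(x)$ is of order $f(x)$ as $x \to \infty$. -/

import Mathlib

open Filter
open Real

private lemma chi_factor (x p q c₁ c₂ α β L γ : ℝ) (hx : 0 < x) (hp : 0 < p) (hq : 0 < q)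
    (hc₁ : 0 < c₁) (hc₂ : 0 ≤ c₂) (hα : 0 < α) (hβ : 0 < β) :
    x + L * γ * ((c₁ * (x * p) + c₂ * (x * q)) / (c₁ * α * p + c₂ * β * q)) =
      x * (1 + L * γ * ((c₁ + c₂ * (q / p)) / (α * c₁ + β * c₂ * (q / p)))) := by
  have hd1 : c₁ * α * p + c₂ * β * q ≠ 0 := by positivity
  have hd2 : α * c₁ + β * c₂ * (q / p) ≠ 0 := by positivity
  field_simp

/-- With `A = 1 + Lγ/α > 0`,
`(U(χ̂(x)) - U(x)) / f(x) → (c₁/(1-α))(A^(1-α) - 1)` as `x → ∞`. -/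
theorem utility_increment_over_f_tendsto
    (c₁ c₂ α β L γ : ℝ) (hc₁ : 0 < c₁) (hc₂ : 0 ≤ c₂)
    (hα : 0 < α) (hαβ : α < β) (hα1 : α ≠ 1) (hβ1 : β ≠ 1) (hγ : 0 < γ)
    (A : ℝ) (hA : A = 1 + L * γ / α) (hApos : 0 < A)
    (U : ℝ → ℝ)
    (hU : ∀ x : ℝ, U x = c₁ / (1 - α) * x ^ (1 - α) + c₂ / (1 - β) * x ^ (1 - β))
    (chiHat : ℝ → ℝ)
    (hchi : ∀ x : ℝ, chiHat x = x + L * γ *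
      ((c₁ * x ^ (-α) + c₂ * x ^ (-β)) /
        (c₁ * α * x ^ (-α - 1) + c₂ * β * x ^ (-β - 1)))) :
    Tendsto (fun x : ℝ => (U (chiHat x) - U x) / (x ^ (1 - α) + x ^ (1 - β)))
      atTop (nhds (c₁ / (1 - α) * (A ^ (1 - α) - 1))) := by
  set s : ℝ → ℝ := fun x => x ^ (α - β) with hs_def
  have hs0 : Tendsto s atTop (nhds 0) := by
    simpa [neg_sub] using tendsto_rpow_neg_atTop (by linarith : (0:ℝ) < β - α)
  set g : ℝ → ℝ := fun x => 1 + L * γ * ((c₁ + c₂ * s x) / (α * c₁ + β * c₂ * s x)) with hg_def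
  have hg : Tendsto g atTop (nhds A) := by
    have h1 : Tendsto (fun x => c₁ + c₂ * s x) atTop (nhds c₁) := by
      simpa using tendsto_const_nhds.add (hs0.const_mul c₂)
    have h2 : Tendsto (fun x => α * c₁ + β * c₂ * s x) atTop (nhds (α * c₁)) := by
      simpa [mul_assoc] using tendsto_const_nhds.add (hs0.const_mul (β * c₂))
    have h3 := h1.div h2 (by positivity)
    have h4 : Tendsto g atTop (nhds (1 + L * γ * (c₁ / (α * c₁)))) :=
      tendsto_const_nhds.add (h3.const_mul (L * γ))
    have : 1 + L * γ * (c₁ / (α * c₁)) = A := by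
      rw [hA]; field_simp
    rwa [this] at h4
  have hgpos : ∀ᶠ x in atTop, 0 < g x := hg.eventually (eventually_gt_nhds hApos)
  have hga : Tendsto (fun x => (g x) ^ (1 - α)) atTop (nhds (A ^ (1 - α))) :=
    hg.rpow_const (Or.inl hApos.ne')
  have hgb : Tendsto (fun x => (g x) ^ (1 - β)) atTop (nhds (A ^ (1 - β))) :=
    hg.rpow_const (Or.inl hApos.ne')
  have hnum : Tendsto (fun x => c₁ / (1 - α) * ((g x) ^ (1 - α) - 1)
      + c₂ / (1 - β) * s x * ((g x) ^ (1 - β) - 1)) atTop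
      (nhds (c₁ / (1 - α) * (A ^ (1 - α) - 1))) := by
    have t1 : Tendsto (fun x => c₁ / (1 - α) * ((g x) ^ (1 - α) - 1)) atTop
        (nhds (c₁ / (1 - α) * (A ^ (1 - α) - 1))) :=
      (hga.sub tendsto_const_nhds).const_mul _
    have t2 : Tendsto (fun x => c₂ / (1 - β) * s x * ((g x) ^ (1 - β) - 1)) atTop
        (nhds 0) := by
      have h := (hs0.const_mul (c₂ / (1 - β))).mul
        (hgb.sub (tendsto_const_nhds (x := (1:ℝ))))
      simpa [mul_assoc] using h
    simpa using t1.add t2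
  have hden : Tendsto (fun x => 1 + s x) atTop (nhds 1) := by
    simpa using tendsto_const_nhds.add hs0
  have hF : Tendsto (fun x => (c₁ / (1 - α) * ((g x) ^ (1 - α) - 1)
      + c₂ / (1 - β) * s x * ((g x) ^ (1 - β) - 1)) / (1 + s x)) atTop
      (nhds (c₁ / (1 - α) * (A ^ (1 - α) - 1))) := by
    have h := hnum.div hden one_ne_zero
    rw [div_one] at h
    exact h
  refine hF.congr' ?_
  filter_upwards [eventually_gt_atTop (0:ℝ), hgpos] with x hx hgx
  have hp : (0:ℝ) < x ^ (-α - 1) := rpow_pos_of_pos hx _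
  have hq : (0:ℝ) < x ^ (-β - 1) := rpow_pos_of_pos hx _
  have hxa : x ^ (-α) = x * x ^ (-α - 1) := by
    have h := Real.rpow_add hx 1 (-α - 1)
    rw [show (1:ℝ) + (-α - 1) = -α by ring, Real.rpow_one] at h
    exact h
  have hxb : x ^ (-β) = x * x ^ (-β - 1) := by
    have h := Real.rpow_add hx 1 (-β - 1)
    rw [show (1:ℝ) + (-β - 1) = -β by ring, Real.rpow_one] at h
    exact h
  have hsx : s x = x ^ (-β - 1) / x ^ (-α - 1) := by
    have h := Real.rpow_sub hx (-β - 1) (-α - 1)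
    rw [show (-β - 1) - (-α - 1) = α - β by ring] at h
    exact h
  have key1 : chiHat x = x * g x := by
    rw [hchi x, hg_def]
    simp only [hxa, hxb, hsx]
    exact chi_factor x _ _ c₁ c₂ α β L γ hx hp hq hc₁ hc₂ hα (hα.trans hαβ)
  -- now the main pointwise identity
  have hu : (0:ℝ) < x ^ (1 - α) := rpow_pos_of_pos hx _
  have hxs : x ^ (1 - β) = x ^ (1 - α) * s x := by
    have h := Real.rpow_add hx (1 - α) (α - β)
    rw [show (1 - α) + (α - β) = 1 - β by ring] at h
    exact h
  have hmul_a : (x * g x) ^ (1 - α) = x ^ (1 - α) * (g x) ^ (1 - α) :=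
    Real.mul_rpow hx.le hgx.le
  have hmul_b : (x * g x) ^ (1 - β) = x ^ (1 - β) * (g x) ^ (1 - β) :=
    Real.mul_rpow hx.le hgx.le
  rw [hU, hU, key1, hmul_a, hmul_b, hxs]
  rw [show c₁ / (1 - α) * (x ^ (1 - α) * (g x) ^ (1 - α)) +
      c₂ / (1 - β) * (x ^ (1 - α) * s x * (g x) ^ (1 - β)) -
      (c₁ / (1 - α) * x ^ (1 - α) + c₂ / (1 - β) * (x ^ (1 - α) * s x)) =
      x ^ (1 - α) * (c₁ / (1 - α) * ((g x) ^ (1 - α) - 1)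
        + c₂ / (1 - β) * s x * ((g x) ^ (1 - β) - 1)) by ring,
    show x ^ (1 - α) + x ^ (1 - α) * s x = x ^ (1 - α) * (1 + s x) by ring,
    mul_div_mul_left _ _ hu.ne']
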